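/- For every integer k ≥ 3 and every positive integer n, θ_k((k−1)·n) ≥ (k−1)! · θ_k(n)^{k−1}. -/
import Mathlib

/-- The value sequence of a permutation `σ` of `Fin n` avoids `k`-term arithmetic
progressions. -/
def AvoidsAP (k : ℕ) {n : ℕ} (σ : Equiv.Perm (Fin n)) : Prop :=
  ¬ ∃ (i : ℕ → Fin n) (d : ℤ), d ≠ 0 ∧ (∀ a b, a < b → b < k → i a < i b) ∧
    ∀ j, j + 1 < k → ((σ (i (j + 1)) : ℕ) : ℤ) = ((σ (i j) : ℕ) : ℤ) + d

/-- `θ_k(n)`: the number of permutations of `{1, …, n}` avoiding `k`-term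
arithmetic progressions. -/
noncomputable def theta (k n : ℕ) : ℕ :=
  Nat.card {σ : Equiv.Perm (Fin n) // AvoidsAP k σ}

def buildPerm (m n : ℕ) (τ : Equiv.Perm (Fin m)) (σ : Fin m → Equiv.Perm (Fin n)) :
    Equiv.Perm (Fin (m * n)) :=
  finProdFinEquiv.symm.trans <|
    (Equiv.prodShear τ fun b => σ b).trans <|
      (Equiv.prodComm _ _).trans <| finProdFinEquiv.trans (finCongr (Nat.mul_comm n m))

lemma buildPerm_apply (m n : ℕ) (τ : Equiv.Perm (Fin m)) (σ : Fin m → Equiv.Perm (Fin n))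
    (b : Fin m) (i : Fin n) :
    ((buildPerm m n τ σ (finProdFinEquiv (b, i))) : ℕ) = (τ b : ℕ) + m * (σ b i : ℕ) := by
  simp [buildPerm]

lemma buildPerm_apply' (m n : ℕ) (τ : Equiv.Perm (Fin m)) (σ : Fin m → Equiv.Perm (Fin n))
    (p : Fin (m * n)) :
    ((buildPerm m n τ σ p) : ℕ)
      = (τ (finProdFinEquiv.symm p).1 : ℕ)
        + m * (σ (finProdFinEquiv.symm p).1 (finProdFinEquiv.symm p).2 : ℕ) := by
  conv_lhs => rw [← finProdFinEquiv.apply_symm_apply p]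
  rw [show finProdFinEquiv ((finProdFinEquiv.symm p)) =
    finProdFinEquiv ((finProdFinEquiv.symm p).1, (finProdFinEquiv.symm p).2) from rfl]
  exact buildPerm_apply m n τ σ _ _

lemma buildPerm_avoids (m n : ℕ) (hm : 2 ≤ m) (τ : Equiv.Perm (Fin m))
    (σ : Fin m → Equiv.Perm (Fin n)) (hσ : ∀ b, AvoidsAP (m + 1) (σ b)) :
    AvoidsAP (m + 1) (buildPerm m n τ σ) := by
  rintro ⟨i, d, hd, hmono, hAP⟩
  have hm0 : 0 < m := by omega
  set P := buildPerm m n τ σ with hP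
  set b : ℕ → Fin m := fun j => (finProdFinEquiv.symm (i j)).1 with hbdef
  set p : ℕ → Fin n := fun j => (finProdFinEquiv.symm (i j)).2 with hpdef
  set v : ℕ → ℕ := fun j => (P (i j) : ℕ) with hvdef
  have hv : ∀ j, v j = (τ (b j) : ℕ) + m * (σ (b j) (p j) : ℕ) := fun j =>
    buildPerm_apply' m n τ σ (i j)
  have hival : ∀ j, (i j : ℕ) = (p j : ℕ) + n * (b j : ℕ) := by
    intro j
    conv_lhs => rw [← finProdFinEquiv.apply_symm_apply (i j)]
    rfl
  have hstep : ∀ j, j + 1 < m + 1 → (v (j + 1) : ℤ) = v j + d := hAP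
  have hlin : ∀ j, j ≤ m → (v j : ℤ) = v 0 + j * d := by
    intro j hj
    induction j with
    | zero => simp
    | succ j ih =>
      rw [hstep j (by omega), ih (by omega)]
      push_cast
      ring
  have hres : ∀ j, v j % m = (τ (b j) : ℕ) := by
    intro j
    rw [hv j, Nat.add_mul_mod_self_left, Nat.mod_eq_of_lt (τ (b j)).2]
  -- first and last block coincide
  have hbm : b m = b 0 := by
    have h1 : (v m : ℤ) = v 0 + m * d := by simpa using hlin m le_rfl
    have h2 : (v m : ℤ) % m = (v 0 : ℤ) % m := by
      rw [h1, Int.add_mul_emod_self_left]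
    have h3 : v m % m = v 0 % m := by exact_mod_cast h2
    apply τ.injective
    apply Fin.val_injective
    rw [← hres m, ← hres 0, h3]
  -- all blocks coincide
  have hble : ∀ a c, a < c → c ≤ m → (b a : ℕ) ≤ (b c : ℕ) := by
    intro a c hac hcm
    by_contra hlt
    push_neg at hlt
    have h1 : i a < i c := hmono a c hac (by omega)
    have h2 : (i c : ℕ) < (i a : ℕ) := by
      rw [hival a, hival c]
      calc (p c : ℕ) + n * (b c : ℕ) < n + n * (b c : ℕ) := by
            have := (p c).2; omega
        _ = n * ((b c : ℕ) + 1) := by ring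
        _ ≤ n * (b a : ℕ) := Nat.mul_le_mul_left n (by omega)
        _ ≤ (p a : ℕ) + n * (b a : ℕ) := Nat.le_add_left _ _
    omega
  have hball : ∀ j, j ≤ m → b j = b 0 := by
    intro j hj
    rcases Nat.eq_or_lt_of_le hj with h | h
    · rw [h, hbm]
    · rcases Nat.eq_zero_or_pos j with h0 | h0
      · rw [h0]
      · apply Fin.val_injective
        have h1 := hble 0 j h0 hj
        have h2 := hble j m h le_rfl
        rw [hbm] at h2
        omega
  -- d is divisible by m
  have hdiv : (m : ℤ) ∣ d := by
    have h1 : (v 1 : ℤ) = v 0 + d := hstep 0 (by omega)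
    have h2 : v 1 % m = v 0 % m := by
      rw [hres 1, hres 0, hball 1 (by omega)]
    have h4 : Int.ModEq (m : ℤ) (v 0 : ℤ) (v 1 : ℤ) := by
      unfold Int.ModEq
      exact_mod_cast h2.symm
    have h3 := h4.dvd
    rw [h1, add_sub_cancel_left] at h3
    exact h3
  obtain ⟨d', hd'⟩ := hdiv
  have hd'0 : d' ≠ 0 := by rintro rfl; simp at hd'; exact hd hd'
  -- contradiction with σ (b 0)
  apply hσ (b 0)
  refine ⟨p, d', hd'0, ?_, ?_⟩
  · intro a c hac hcm
    have h1 : i a < i c := hmono a c hac hcm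
    have h2 : (i a : ℕ) < (i c : ℕ) := h1
    rw [hival a, hival c, hball a (by omega), hball c (by omega)] at h2
    exact Fin.lt_def.mpr (by omega)
  · intro j hj
    have h1 : (v (j + 1) : ℤ) = v j + d := hstep j hj
    rw [hv (j + 1), hv j, hball (j + 1) (by omega), hball j (by omega), hd'] at h1
    push_cast at h1
    have h3 : (m : ℤ) * ((σ (b 0) (p (j + 1)) : ℕ) : ℤ)
        = (m : ℤ) * (((σ (b 0) (p j) : ℕ) : ℤ) + d') := by ring_nf; ring_nf at h1; linarith
    exact mul_left_cancel₀ (by exact_mod_cast hm0.ne' : (m : ℤ) ≠ 0) h3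

lemma buildPerm_inj (m n : ℕ) (hm : 0 < m) (hn : 0 < n)
    (τ τ' : Equiv.Perm (Fin m)) (σ σ' : Fin m → Equiv.Perm (Fin n))
    (h : buildPerm m n τ σ = buildPerm m n τ' σ') : τ = τ' ∧ σ = σ' := by
  have key : ∀ (b : Fin m) (i : Fin n),
      (τ b : ℕ) + m * (σ b i : ℕ) = (τ' b : ℕ) + m * (σ' b i : ℕ) := by
    intro b i
    rw [← buildPerm_apply m n τ σ b i, ← buildPerm_apply m n τ' σ' b i, h]
  have hτ : ∀ b : Fin m, τ b = τ' b := by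
    intro b
    have h1 := key b ⟨0, hn⟩
    apply Fin.val_injective
    have h2 := congrArg (· % m) h1
    simpa [Nat.add_mul_mod_self_left, Nat.mod_eq_of_lt (τ b).2,
      Nat.mod_eq_of_lt (τ' b).2] using h2
  have hσ : ∀ (b : Fin m) (i : Fin n), σ b i = σ' b i := by
    intro b i
    have h1 := key b i
    rw [hτ b] at h1
    apply Fin.val_injective
    have : m * (σ b i : ℕ) = m * (σ' b i : ℕ) := by omega
    exact Nat.eq_of_mul_eq_mul_left hm this
  exact ⟨Equiv.ext hτ, funext fun b => Equiv.ext fun i => hσ b i⟩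

/-- `θ_k((k−1)n) ≥ (k−1)! ⬝ θ_k(n)^{k−1}` for `k ≥ 3` and `n ≥ 1`. -/
theorem theta_rec (k n : ℕ) (hk : 3 ≤ k) (hn : 0 < n) :
    (k - 1).factorial * theta k n ^ (k - 1) ≤ theta k ((k - 1) * n) := by
  obtain ⟨m, rfl⟩ : ∃ m, k = m + 1 := ⟨k - 1, by omega⟩
  have hm : 2 ≤ m := by omega
  simp only [Nat.add_sub_cancel]
  set F : Equiv.Perm (Fin m) × (Fin m → {σ : Equiv.Perm (Fin n) // AvoidsAP (m + 1) σ}) →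
      {ρ : Equiv.Perm (Fin (m * n)) // AvoidsAP (m + 1) ρ} :=
    fun x => ⟨buildPerm m n x.1 fun b => (x.2 b).1,
      buildPerm_avoids m n hm x.1 _ fun b => (x.2 b).2⟩ with hF
  have Finj : Function.Injective F := by
    rintro ⟨τ, σ⟩ ⟨τ', σ'⟩ h
    have h' : buildPerm m n τ (fun b => (σ b).1) = buildPerm m n τ' (fun b => (σ' b).1) :=
      congrArg Subtype.val h
    obtain ⟨h1, h2⟩ := buildPerm_inj m n (by omega) hn _ _ _ _ h'
    exact Prod.ext h1 (funext fun b => Subtype.ext (congrFun h2 b))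
  calc m.factorial * theta (m + 1) n ^ m
      = Nat.card (Equiv.Perm (Fin m) ×
          (Fin m → {σ : Equiv.Perm (Fin n) // AvoidsAP (m + 1) σ})) := by
        rw [Nat.card_prod, Nat.card_fun]
        simp [theta, Nat.card_eq_fintype_card, Fintype.card_perm]
    _ ≤ Nat.card {ρ : Equiv.Perm (Fin (m * n)) // AvoidsAP (m + 1) ρ} :=
        Nat.card_le_card_of_injective F Finj
    _ = theta (m + 1) (m * n) := rfl
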